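/- For every k ≥ 3, the C^kX permutation of (Fin (k+1) → Bool) cannot be written as a composition of finitely many permutations each of which acts on at most 3 coordinates; i.e., C^kX on k+1 qubits is not implementable over the {CCX, CX, X} gate set without at least one ancilla qubit. -/

import Mathlib

/-- The action of the `C^kX` gate on bit strings of length `k+1`: the first `k`
coordinates (the controls) are unchanged, and the last coordinate (the target) is
XORed with the AND of all controls. -/
def ckxFun (k : ℕ) (x : Fin (k + 1) → Bool) : Fin (k + 1) → Bool :=
  fun i => if i = Fin.last k then
    xor (x i) (decide (∀ j : Fin k, x j.castSucc = true)) else x i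

theorem ckxFun_involutive (k : ℕ) : Function.Involutive (ckxFun k) := by
  intro x
  funext i
  have hne : ∀ j : Fin k, (j.castSucc : Fin (k + 1)) ≠ Fin.last k :=
    fun j => (Fin.castSucc_lt_last j).ne
  by_cases hi : i = Fin.last k
  · subst hi
    simp only [ckxFun, if_pos rfl]
    cases x (Fin.last k) <;> simp [hne]
  · simp [ckxFun, hi]

/-- The `C^kX` permutation of `Fin (k+1) → Bool`. -/
def ckx (k : ℕ) : Equiv.Perm (Fin (k + 1) → Bool) := (ckxFun_involutive k).toPerm _

/-- A permutation `g` of bit strings *acts on at most 3 coordinates (qubits)* if there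
is a set `S` of at most 3 coordinates such that `g` leaves all coordinates outside `S`
unchanged, and the restriction of `g x` to `S` depends only on the restriction of `x`
to `S`. -/
def ActsOnAtMost3 {n : ℕ} (g : Equiv.Perm (Fin n → Bool)) : Prop :=
  ∃ S : Finset (Fin n), S.card ≤ 3 ∧
    (∀ (x : Fin n → Bool) (i : Fin n), i ∉ S → g x i = x i) ∧
    (∀ x y : Fin n → Bool, (∀ i ∈ S, x i = y i) → ∀ i ∈ S, g x i = g y i)

/-- **`C^kX` needs an ancilla over `{CCX, CX, X}`.**
For every `k ≥ 3`, the `C^kX` permutation of `Fin (k+1) → Bool` cannot be written as a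
composition of finitely many permutations each of which acts on at most 3 coordinates;
i.e. `C^kX` on `k+1` qubits is not implementable over the `{CCX, CX, X}` gate set
without at least one ancilla qubit. -/

theorem sign_eq_one_of_3local {n : ℕ} (hn : 4 ≤ n) (g : Equiv.Perm (Fin n → Bool))
    (hg : ∃ S : Finset (Fin n), S.card ≤ 3 ∧
      (∀ (x : Fin n → Bool) (i : Fin n), i ∉ S → g x i = x i) ∧
      (∀ x y : Fin n → Bool, (∀ i ∈ S, x i = y i) → ∀ i ∈ S, g x i = g y i)) :
    Equiv.Perm.sign g = 1 := by
  obtain ⟨S, hcard, hout, hin⟩ := hg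
  classical
  set e := Equiv.piEquivPiSubtypeProd (fun i : Fin n => i ∈ S) (fun _ => Bool) with he
  set h := e.permCongr g with hh
  set c₀ : {i : Fin n // ¬ i ∈ S} → Bool := fun _ => false with hc₀
  set f : ({i : Fin n // i ∈ S} → Bool) → ({i : Fin n // i ∈ S} → Bool) :=
    fun a => (h (a, c₀)).1 with hf
  have key : ∀ a b, h (a, b) = (f a, b) := by
    intro a b
    have hxmem : ∀ (b : {i : Fin n // ¬ i ∈ S} → Bool) (i : Fin n) (hi : i ∈ S),
        e.symm (a, b) i = a ⟨i, hi⟩ := by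
      intro b i hi
      simp [he, hi]
    ext i
    · -- first component
      have := hin (e.symm (a, b)) (e.symm (a, c₀))
        (fun i hi => by rw [hxmem b i hi, hxmem c₀ i hi]) i.1 i.2
      simpa [hh, he, hf, Equiv.permCongr_apply] using this
    · -- second component
      have h1 : g (e.symm (a, b)) i.1 = e.symm (a, b) i.1 := hout _ _ i.2
      have h2 : e.symm (a, b) i.1 = b i := by simp [he, i.2]
      simpa [hh, he, Equiv.permCongr_apply, h2] using h1.trans h2
  have hbij : Function.Bijective f := by
    constructor
    · intro a a' haa
      have : h (a, c₀) = h (a', c₀) := by rw [key, key, haa]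
      exact (Prod.mk.injEq _ _ _ _).mp (h.injective this) |>.1
    · intro c
      obtain ⟨⟨a, b⟩, hab⟩ := h.surjective (c, c₀)
      rw [key] at hab
      exact ⟨a, (Prod.mk.injEq _ _ _ _).mp hab |>.1⟩
  set σ := Equiv.ofBijective f hbij with hσ
  have hhs : h = Equiv.prodCongrLeft (fun _ => σ) := by
    ext ⟨a, b⟩ : 1
    rw [key]
    rfl
  have hsg : Equiv.Perm.sign g = Equiv.Perm.sign h := (Equiv.Perm.sign_permCongr e g).symm
  rw [hsg, hhs, Equiv.Perm.sign_prodCongrLeft]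
  rw [Finset.prod_const, Finset.card_univ]
  have hev : Even (Fintype.card ({i : Fin n // ¬ i ∈ S} → Bool)) := by
    rw [Fintype.card_fun, Fintype.card_bool]
    have hpos : 0 < Fintype.card {i : Fin n // ¬ i ∈ S} := by
      rw [Fintype.card_pos_iff]
      have : ∃ i : Fin n, i ∉ S := by
        by_contra hcon
        push_neg at hcon
        have : S = Finset.univ := Finset.eq_univ_iff_forall.mpr hcon
        rw [this, Finset.card_univ, Fintype.card_fin] at hcard
        omega
      exact ⟨⟨this.choose, this.choose_spec⟩⟩
    exact (Nat.even_pow' (by omega)).mpr even_two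
  obtain ⟨c, hc⟩ := hev
  rw [hc, ← two_mul, pow_mul, Int.units_sq, one_pow]

theorem ckx_eq_swap (k : ℕ) :
    ckx k = Equiv.swap (fun _ => true)
      (Function.update (fun _ => true) (Fin.last k) false) := by
  classical
  set vT : Fin (k + 1) → Bool := fun _ => true with hvT
  set vF : Fin (k + 1) → Bool := Function.update vT (Fin.last k) false with hvF
  have hne : ∀ j : Fin k, (j.castSucc : Fin (k + 1)) ≠ Fin.last k :=
    fun j => (Fin.castSucc_lt_last j).ne
  have hFcast : ∀ j : Fin k, vF j.castSucc = true := fun j => by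
    rw [hvF, Function.update_of_ne (hne j)]
  have hFlast : vF (Fin.last k) = false := by rw [hvF, Function.update_self]
  have hTF : vT ≠ vF := fun h => by
    have := congrFun h (Fin.last k)
    rw [hFlast] at this
    simp at this
  ext x : 1
  show ckxFun k x = Equiv.swap vT vF x
  by_cases hc : ∀ j : Fin k, x j.castSucc = true
  · by_cases hl : x (Fin.last k) = true
    · have hx : x = vT := by
        funext i
        induction i using Fin.lastCases with
        | last => exact hl
        | cast j => exact hc j
      subst hx
      rw [Equiv.swap_apply_left]
      funext i
      by_cases hi : i = Fin.last k
      · subst hi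
        simp [ckxFun, hFlast, hvT]
      · simp only [ckxFun, if_neg hi]
        induction i using Fin.lastCases with
        | last => exact absurd rfl hi
        | cast j => exact (hFcast j).symm
    · have hx : x = vF := by
        funext i
        induction i using Fin.lastCases with
        | last => rw [hFlast]; exact Bool.eq_false_iff.mpr hl
        | cast j => rw [hFcast j]; exact hc j
      subst hx
      rw [Equiv.swap_apply_right]
      funext i
      by_cases hi : i = Fin.last k
      · subst hi
        simp [ckxFun, hFlast, hFcast, hvT]
      · simp only [ckxFun, if_neg hi]
        rw [hvF, Function.update_of_ne hi]
  · push_neg at hc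
    obtain ⟨j, hj⟩ := hc
    have hxT : x ≠ vT := fun h => hj (congrFun h j.castSucc)
    have hxF : x ≠ vF := fun h => hj (by rw [h]; exact hFcast j)
    rw [Equiv.swap_apply_of_ne_of_ne hxT hxF]
    funext i
    by_cases hi : i = Fin.last k
    · subst hi
      have : (decide (∀ j : Fin k, x j.castSucc = true)) = false := by
        simp only [decide_eq_false_iff_not]
        exact fun h => hj (h j)
      simp [ckxFun, this]
    · simp [ckxFun, hi]

theorem sign_ckx (k : ℕ) : Equiv.Perm.sign (ckx k) = -1 := by
  rw [ckx_eq_swap]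
  apply Equiv.Perm.sign_swap
  intro h
  have := congrFun h (Fin.last k)
  rw [Function.update_self] at this
  simp at this

theorem ckx_not_composition_of_3local (k : ℕ) (hk : 3 ≤ k) :
    ¬ ∃ L : List (Equiv.Perm (Fin (k + 1) → Bool)),
        (∀ g ∈ L, ActsOnAtMost3 g) ∧ L.prod = ckx k := by
  rintro ⟨L, hL, hprod⟩
  have h1 : Equiv.Perm.sign L.prod = 1 := by
    rw [map_list_prod]
    apply List.prod_eq_one
    intro u hu
    obtain ⟨g, hg, rfl⟩ := List.mem_map.mp hu
    exact sign_eq_one_of_3local (by omega) g (hL g hg)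
  rw [hprod, sign_ckx] at h1
  exact absurd h1 (by decide)
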